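/- Each of the functions C₁(m,n,e) = ½ n·n + λ m·e, C₂(m,n,e) = e·n and C₃(m,n,e) = e·e is a Casimir of the magnetic rod Poisson bracket: for every differentiable function g : ℝ³×ℝ³×ℝ³ → ℝ and every point (m,n,e), one has {Cᵢ, g}(m,n,e) = 0 for i = 1, 2, 3. -/

import Mathlib

open Matrix Real

set_option maxHeartbeats 1000000

/-- The phase space of the magnetic rod: triples `(m, n, e)` of vectors in `ℝ³`. -/
abbrev RodPhase : Type := (Fin 3 → ℝ) × (Fin 3 → ℝ) × (Fin 3 → ℝ)

/-- Gradient of `f : RodPhase → ℝ` with respect to the first (`m`) argument. -/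
noncomputable def gradM (f : RodPhase → ℝ) (p : RodPhase) : Fin 3 → ℝ :=
  fun i => fderiv ℝ f p (Pi.single i 1, 0, 0)

/-- Gradient of `f : RodPhase → ℝ` with respect to the second (`n`) argument. -/
noncomputable def gradN (f : RodPhase → ℝ) (p : RodPhase) : Fin 3 → ℝ :=
  fun i => fderiv ℝ f p (0, Pi.single i 1, 0)

/-- Gradient of `f : RodPhase → ℝ` with respect to the third (`e`) argument. -/
noncomputable def gradE (f : RodPhase → ℝ) (p : RodPhase) : Fin 3 → ℝ :=
  fun i => fderiv ℝ f p (0, 0, Pi.single i 1)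

/-- The magnetic rod Poisson bracket
`{f,g}(m,n,e) = −m·(∇ₘf × ∇ₘg) − n·(∇ₘf × ∇ₙg + ∇ₙf × ∇ₘg)
  − e·(∇ₘf × ∇ₑg + ∇ₑf × ∇ₘg) − λ e·(∇ₙf × ∇ₙg)`. -/
noncomputable def rodBracket (lam : ℝ) (f g : RodPhase → ℝ) (p : RodPhase) : ℝ :=
  - (p.1 ⬝ᵥ (gradM f p ⨯₃ gradM g p))
  - (p.2.1 ⬝ᵥ (gradM f p ⨯₃ gradN g p + gradN f p ⨯₃ gradM g p))
  - (p.2.2 ⬝ᵥ (gradM f p ⨯₃ gradE g p + gradE f p ⨯₃ gradM g p))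
  - lam * (p.2.2 ⬝ᵥ (gradN f p ⨯₃ gradN g p))

/-- Coordinate functional `p ↦ p.1 i` as a continuous linear map. -/
noncomputable def coM (i : Fin 3) : RodPhase →L[ℝ] ℝ :=
  (ContinuousLinearMap.proj i).comp (ContinuousLinearMap.fst ℝ (Fin 3 → ℝ) ((Fin 3 → ℝ) × (Fin 3 → ℝ)))

/-- Coordinate functional `p ↦ p.2.1 i` as a continuous linear map. -/
noncomputable def coN (i : Fin 3) : RodPhase →L[ℝ] ℝ :=
  ((ContinuousLinearMap.proj i).comp (ContinuousLinearMap.fst ℝ (Fin 3 → ℝ) (Fin 3 → ℝ))).comp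
    (ContinuousLinearMap.snd ℝ (Fin 3 → ℝ) ((Fin 3 → ℝ) × (Fin 3 → ℝ)))

/-- Coordinate functional `p ↦ p.2.2 i` as a continuous linear map. -/
noncomputable def coE (i : Fin 3) : RodPhase →L[ℝ] ℝ :=
  ((ContinuousLinearMap.proj i).comp (ContinuousLinearMap.snd ℝ (Fin 3 → ℝ) (Fin 3 → ℝ))).comp
    (ContinuousLinearMap.snd ℝ (Fin 3 → ℝ) ((Fin 3 → ℝ) × (Fin 3 → ℝ)))

/-- Each of `C₁ = ½ n·n + λ m·e`, `C₂ = e·n` and `C₃ = e·e` is a Casimir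
of the magnetic rod Poisson bracket: it brackets to zero with every differentiable
function `g` at every point. -/
theorem casimirs_of_rodBracket (lam : ℝ)
    (C₁ C₂ C₃ : RodPhase → ℝ)
    (hC₁ : ∀ p : RodPhase, C₁ p = (1 / 2) * (p.2.1 ⬝ᵥ p.2.1) + lam * (p.1 ⬝ᵥ p.2.2))
    (hC₂ : ∀ p : RodPhase, C₂ p = p.2.2 ⬝ᵥ p.2.1)
    (hC₃ : ∀ p : RodPhase, C₃ p = p.2.2 ⬝ᵥ p.2.2) :
    ∀ g : RodPhase → ℝ, Differentiable ℝ g →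
      ∀ p : RodPhase,
        rodBracket lam C₁ g p = 0 ∧ rodBracket lam C₂ g p = 0 ∧ rodBracket lam C₃ g p = 0 := by
  intro g _hg p
  have hm : ∀ i, HasFDerivAt (fun q : RodPhase => q.1 i) (coM i) p := fun i => (coM i).hasFDerivAt
  have hn : ∀ i, HasFDerivAt (fun q : RodPhase => q.2.1 i) (coN i) p := fun i => (coN i).hasFDerivAt
  have he : ∀ i, HasFDerivAt (fun q : RodPhase => q.2.2 i) (coE i) p := fun i => (coE i).hasFDerivAt
  -- C₁
  have e1 : C₁ = fun q : RodPhase =>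
      (1/2) * (q.2.1 0 * q.2.1 0 + (q.2.1 1 * q.2.1 1 + q.2.1 2 * q.2.1 2))
      + lam * (q.1 0 * q.2.2 0 + (q.1 1 * q.2.2 1 + q.1 2 * q.2.2 2)) := by
    funext q; rw [hC₁]; simp [dotProduct, Fin.sum_univ_three]; ring
  have hd1 := ((((hn 0).mul (hn 0)).add (((hn 1).mul (hn 1)).add ((hn 2).mul (hn 2)))).const_mul (1/2)).add
    ((((hm 0).mul (he 0)).add (((hm 1).mul (he 1)).add ((hm 2).mul (he 2)))).const_mul lam)
  replace hd1 := hd1.congr_of_eventuallyEq (Filter.Eventually.of_forall fun q => congrFun e1 q)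
  have f1 := hd1.fderiv
  have gm1 : gradM C₁ p = fun i => lam * p.2.2 i := by
    funext i; rw [gradM, f1]
    simp only [ContinuousLinearMap.add_apply, ContinuousLinearMap.smul_apply, coM, coN, coE,
      ContinuousLinearMap.comp_apply, ContinuousLinearMap.coe_fst', ContinuousLinearMap.coe_snd',
      ContinuousLinearMap.proj_apply, smul_eq_mul, Pi.zero_apply]
    fin_cases i <;> simp [Pi.single_apply] <;> ring
  have gn1 : gradN C₁ p = fun i => p.2.1 i := by
    funext i; rw [gradN, f1]
    simp only [ContinuousLinearMap.add_apply, ContinuousLinearMap.smul_apply, coM, coN, coE,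
      ContinuousLinearMap.comp_apply, ContinuousLinearMap.coe_fst', ContinuousLinearMap.coe_snd',
      ContinuousLinearMap.proj_apply, smul_eq_mul, Pi.zero_apply]
    fin_cases i <;> simp [Pi.single_apply] <;> ring
  have ge1 : gradE C₁ p = fun i => lam * p.1 i := by
    funext i; rw [gradE, f1]
    simp only [ContinuousLinearMap.add_apply, ContinuousLinearMap.smul_apply, coM, coN, coE,
      ContinuousLinearMap.comp_apply, ContinuousLinearMap.coe_fst', ContinuousLinearMap.coe_snd',
      ContinuousLinearMap.proj_apply, smul_eq_mul, Pi.zero_apply]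
    fin_cases i <;> simp [Pi.single_apply] <;> ring
  -- C₂
  have e2 : C₂ = fun q : RodPhase =>
      q.2.2 0 * q.2.1 0 + (q.2.2 1 * q.2.1 1 + q.2.2 2 * q.2.1 2) := by
    funext q; rw [hC₂]; simp [dotProduct, Fin.sum_univ_three]; ring
  have hd2 := ((he 0).mul (hn 0)).add (((he 1).mul (hn 1)).add ((he 2).mul (hn 2)))
  replace hd2 := hd2.congr_of_eventuallyEq (Filter.Eventually.of_forall fun q => congrFun e2 q)
  have f2 := hd2.fderiv
  have gm2 : gradM C₂ p = fun _ => (0:ℝ) := by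
    funext i; rw [gradM, f2]
    simp only [ContinuousLinearMap.add_apply, ContinuousLinearMap.smul_apply, coM, coN, coE,
      ContinuousLinearMap.comp_apply, ContinuousLinearMap.coe_fst', ContinuousLinearMap.coe_snd',
      ContinuousLinearMap.proj_apply, smul_eq_mul, Pi.zero_apply]
    fin_cases i <;> simp [Pi.single_apply]
  have gn2 : gradN C₂ p = fun i => p.2.2 i := by
    funext i; rw [gradN, f2]
    simp only [ContinuousLinearMap.add_apply, ContinuousLinearMap.smul_apply, coM, coN, coE,
      ContinuousLinearMap.comp_apply, ContinuousLinearMap.coe_fst', ContinuousLinearMap.coe_snd',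
      ContinuousLinearMap.proj_apply, smul_eq_mul, Pi.zero_apply]
    fin_cases i <;> simp [Pi.single_apply]
  have ge2 : gradE C₂ p = fun i => p.2.1 i := by
    funext i; rw [gradE, f2]
    simp only [ContinuousLinearMap.add_apply, ContinuousLinearMap.smul_apply, coM, coN, coE,
      ContinuousLinearMap.comp_apply, ContinuousLinearMap.coe_fst', ContinuousLinearMap.coe_snd',
      ContinuousLinearMap.proj_apply, smul_eq_mul, Pi.zero_apply]
    fin_cases i <;> simp [Pi.single_apply]
  -- C₃
  have e3 : C₃ = fun q : RodPhase =>
      q.2.2 0 * q.2.2 0 + (q.2.2 1 * q.2.2 1 + q.2.2 2 * q.2.2 2) := by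
    funext q; rw [hC₃]; simp [dotProduct, Fin.sum_univ_three]; ring
  have hd3 := ((he 0).mul (he 0)).add (((he 1).mul (he 1)).add ((he 2).mul (he 2)))
  replace hd3 := hd3.congr_of_eventuallyEq (Filter.Eventually.of_forall fun q => congrFun e3 q)
  have f3 := hd3.fderiv
  have gm3 : gradM C₃ p = fun _ => (0:ℝ) := by
    funext i; rw [gradM, f3]
    simp only [ContinuousLinearMap.add_apply, ContinuousLinearMap.smul_apply, coM, coN, coE,
      ContinuousLinearMap.comp_apply, ContinuousLinearMap.coe_fst', ContinuousLinearMap.coe_snd',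
      ContinuousLinearMap.proj_apply, smul_eq_mul, Pi.zero_apply]
    fin_cases i <;> simp [Pi.single_apply]
  have gn3 : gradN C₃ p = fun _ => (0:ℝ) := by
    funext i; rw [gradN, f3]
    simp only [ContinuousLinearMap.add_apply, ContinuousLinearMap.smul_apply, coM, coN, coE,
      ContinuousLinearMap.comp_apply, ContinuousLinearMap.coe_fst', ContinuousLinearMap.coe_snd',
      ContinuousLinearMap.proj_apply, smul_eq_mul, Pi.zero_apply]
    fin_cases i <;> simp [Pi.single_apply]
  have ge3 : gradE C₃ p = fun i => 2 * p.2.2 i := by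
    funext i; rw [gradE, f3]
    simp only [ContinuousLinearMap.add_apply, ContinuousLinearMap.smul_apply, coM, coN, coE,
      ContinuousLinearMap.comp_apply, ContinuousLinearMap.coe_fst', ContinuousLinearMap.coe_snd',
      ContinuousLinearMap.proj_apply, smul_eq_mul, Pi.zero_apply]
    fin_cases i <;> simp [Pi.single_apply] <;> ring
  refine ⟨?_, ?_, ?_⟩ <;>
    simp only [rodBracket, gm1, gn1, ge1, gm2, gn2, ge2, gm3, gn3, ge3,
      crossProduct, dotProduct, Fin.sum_univ_three] <;>
    simp <;> ring
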